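/- Let 𝒦 be a finite set of strings over an alphabet Σ, and let S_i, S_j be strings such that S_j is a proper suffix of S_i and S_i occurs in at least one string of 𝒦. Suppose that every string S' such that S_j is a suffix of S', S' is a suffix of S_i and S' ≠ S_i is not left-maximal in 𝒦. Then S_i and S_j have the same sets of following characters in 𝒦: for every c ∈ Σ, the string S_i ++ [c] occurs as a contiguous sublist of some string of 𝒦 if and only if S_j ++ [c] occurs as a contiguous sublist of some string of 𝒦. (In de Bruijn graph terms: the nodes labelled S_i and S_j have the same outgoing edge labels.) -/

import Mathlib

/-- `NotLeftMaximal 𝒦 P` : there is a character `a` such that every occurrence of `P`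
in a string of `𝒦` is immediately preceded by `a`. -/
def NotLeftMaximal {α : Type*} (𝒦 : Finset (List α)) (P : List α) : Prop :=
  ∃ a : α, ∀ T ∈ 𝒦, ∀ u v : List α, T = u ++ P ++ v → u ≠ [] ∧ u.getLast? = some a

/-- If `Sj` is a proper suffix of `Si`, `Si` occurs in some string of `𝒦`, and no
intermediate suffix `S'` (with `Sj <:+ S' <:+ Si`, `S' ≠ Si`) is left-maximal in `𝒦`,
then `Si` and `Sj` have the same sets of following characters in `𝒦` (i.e. the nodes
labelled `Si` and `Sj` have the same outgoing edge labels in the de Bruijn graph). -/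
theorem same_outgoing_edges_of_not_left_maximal {α : Type*} (𝒦 : Finset (List α))
    (Si Sj : List α) (hsuf : Sj <:+ Si) (hproper : Sj ≠ Si)
    (hocc : ∃ T ∈ 𝒦, Si <:+: T)
    (hnlm : ∀ S' : List α, Sj <:+ S' → S' <:+ Si → S' ≠ Si → NotLeftMaximal 𝒦 S') :
    ∀ c : α, (∃ T ∈ 𝒦, (Si ++ [c]) <:+: T) ↔ (∃ T ∈ 𝒦, (Sj ++ [c]) <:+: T) := by
  have key : ∀ n (S' : List α) (c : α), Sj <:+ S' → S' <:+ Si →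
      Si.length - S'.length ≤ n →
      (∃ T ∈ 𝒦, (S' ++ [c]) <:+: T) → (∃ T ∈ 𝒦, (Si ++ [c]) <:+: T) := by
    intro n
    induction n with
    | zero =>
      intro S' c _ hS'Si hle h
      obtain ⟨w, hw⟩ := hS'Si
      have : S' = Si := by
        have hl : Si.length = w.length + S'.length := by
          rw [← hw, List.length_append]
        have : w.length = 0 := by omega
        rw [List.length_eq_zero_iff] at this
        simp [this] at hw
        exact hw
      rwa [← this]
    | succ n ih =>
      intro S' c hSjS' hS'Si hle h
      by_cases heq : S' = Si
      · rwa [← heq]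
      · obtain ⟨a, ha⟩ := hnlm S' hSjS' hS'Si heq
        -- extend the occurrence of S' ++ [c] to (a :: S') ++ [c]
        obtain ⟨T, hT, u, v, huv⟩ := h
        have huv' : T = u ++ S' ++ ([c] ++ v) := by
          rw [← huv]; simp
        obtain ⟨hune, hulast⟩ := ha T hT u ([c] ++ v) huv'
        obtain ⟨u', hu'⟩ : ∃ u', u = u' ++ [a] := by
          refine ⟨u.dropLast, ?_⟩
          have := List.dropLast_append_getLast hune
          rw [List.getLast?_eq_getLast hune] at hulast
          rw [Option.some_inj] at hulast
          rw [hulast] at this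
          exact this.symm
        -- show a :: S' is a suffix of Si
        obtain ⟨w, hw⟩ := hS'Si
        have hwne : w ≠ [] := by
          intro h0; apply heq; simpa [h0] using hw
        obtain ⟨T₀, hT₀, u₀, v₀, huv₀⟩ := hocc
        have huv₀' : T₀ = (u₀ ++ w) ++ S' ++ v₀ := by
          rw [← huv₀, ← hw]; simp
        obtain ⟨-, hwlast⟩ := ha T₀ hT₀ (u₀ ++ w) v₀ huv₀'
        have hwl : w.getLast? = some a := by
          rw [List.getLast?_append_of_ne_nil _ hwne] at hwlast
          exact hwlast
        obtain ⟨w', hw'⟩ : ∃ w', w = w' ++ [a] := by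
          refine ⟨w.dropLast, ?_⟩
          have := List.dropLast_append_getLast hwne
          rw [List.getLast?_eq_getLast hwne] at hwl
          rw [Option.some_inj] at hwl
          rw [hwl] at this
          exact this.symm
        have hsuf' : (a :: S') <:+ Si := ⟨w', by rw [← hw, hw']; simp⟩
        have hSjsuf : Sj <:+ (a :: S') := hSjS'.trans (List.suffix_cons a S')
        have hlen : Si.length - (a :: S').length ≤ n := by
          have : S'.length < Si.length := by
            rw [← hw, List.length_append]
            have : 0 < w.length := List.length_pos_iff.mpr hwne
            omega
          simp only [List.length_cons]
          omega
        refine ih (a :: S') c hSjsuf hsuf' hlen ⟨T, hT, u', v, ?_⟩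
        rw [huv', hu']; simp
  intro c
  constructor
  · rintro ⟨T, hT, hinf⟩
    refine ⟨T, hT, ?_⟩
    obtain ⟨w, hw⟩ := hsuf
    have : (Sj ++ [c]) <:+: (Si ++ [c]) := ⟨w, [], by rw [← hw]; simp⟩
    exact this.trans hinf
  · rintro ⟨T, hT, hinf⟩
    obtain ⟨u, v, huv⟩ := hinf
    exact key Si.length Sj c (List.suffix_refl Sj) hsuf (by omega) ⟨T, hT, u, v, huv⟩
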